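/- For A ∈ T, the non-zero elements of β(A) ∈ S are exactly the elements w₁* w₂ where, ranging over the leaves of A, w₁ (read right to left) describes the path from the root of A to that leaf and w₂ is the color of the leaf; in particular the number of non-zero elements of β(A) equals the number of leaves of A. -/

import Mathlib

open scoped Pointwise

/-- Generators of the branch monoid `B`: π₁, π₂, their stars, and 0. -/
inductive Bgen : Type
  | pi : Fin 2 → Bgen
  | pis : Fin 2 → Bgen
  | zero : Bgen

/-- Defining relations of the branch monoid: `0·b = b·0 = 0` and `πᵢπⱼ* = δᵢⱼ`. -/
inductive Brel : FreeMonoid Bgen → FreeMonoid Bgen → Prop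
  | zero_mul (x : FreeMonoid Bgen) :
      Brel (FreeMonoid.of Bgen.zero * x) (FreeMonoid.of Bgen.zero)
  | mul_zero (x : FreeMonoid Bgen) :
      Brel (x * FreeMonoid.of Bgen.zero) (FreeMonoid.of Bgen.zero)
  | pi_pis_same (i : Fin 2) :
      Brel (FreeMonoid.of (Bgen.pi i) * FreeMonoid.of (Bgen.pis i)) 1
  | pi_pis_ne (i j : Fin 2) : i ≠ j →
      Brel (FreeMonoid.of (Bgen.pi i) * FreeMonoid.of (Bgen.pis j))
        (FreeMonoid.of Bgen.zero)

/-- The congruence generated by the defining relations. -/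
def Bcon : Con (FreeMonoid Bgen) := conGen Brel

/-- The branch monoid `B`. -/
abbrev Bmon : Type := Bcon.Quotient

/-- The absorbing element `0` of `B`. -/
def bz : Bmon := Bcon.mk' (FreeMonoid.of Bgen.zero)

/-- The image of πᵢ in `B`. -/
def bpi (i : Fin 2) : Bmon := Bcon.mk' (FreeMonoid.of (Bgen.pi i))

/-- The image of πᵢ* in `B`. -/
def bpis (i : Fin 2) : Bmon := Bcon.mk' (FreeMonoid.of (Bgen.pis i))

/-- The inclusion of the free monoid `F` on π₁, π₂ into `B`. -/
def ιF : FreeMonoid (Fin 2) →* Bmon :=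
  Bcon.mk'.comp (FreeMonoid.map Bgen.pi)

/-- The star `w*` of a word `w ∈ F`, as an element of `B`: reverse the word and
star each letter. -/
def bstar (w : FreeMonoid (Fin 2)) : Bmon :=
  Bcon.mk' (FreeMonoid.ofList (((FreeMonoid.toList w).reverse).map Bgen.pis))

theorem bz_mul (x : Bmon) : bz * x = bz := by
  induction x using Con.induction_on with
  | H x => exact Con.eq Bcon |>.2 (ConGen.Rel.of _ _ (Brel.zero_mul x))

theorem mul_bz (x : Bmon) : x * bz = bz := by
  induction x using Con.induction_on with
  | H x => exact Con.eq Bcon |>.2 (ConGen.Rel.of _ _ (Brel.mul_zero x))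

/-- The monoid `S` of subsets of `B` containing `0`, under elementwise
multiplication; the identity is `{0, 1}`. -/
def Smon : Type := {X : Set Bmon // bz ∈ X}

noncomputable instance : Monoid Smon where
  mul X Y := ⟨X.val * Y.val, ⟨bz, X.prop, bz, Y.prop, bz_mul bz⟩⟩
  one := ⟨{bz, 1}, Or.inl rfl⟩
  mul_assoc X Y Z := Subtype.ext (mul_assoc X.val Y.val Z.val)
  one_mul X := Subtype.ext <| by
    show ({bz, 1} : Set Bmon) * X.val = X.val
    rw [Set.insert_eq, Set.union_mul, Set.singleton_mul, Set.singleton_mul]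
    ext b
    constructor
    · rintro (⟨x, hx, rfl⟩ | ⟨x, hx, rfl⟩)
      · simpa [bz_mul] using X.prop
      · simpa [one_mul] using hx
    · intro hb
      exact Or.inr ⟨b, hb, one_mul b⟩
  mul_one X := Subtype.ext <| by
    show X.val * ({bz, 1} : Set Bmon) = X.val
    rw [Set.insert_eq, Set.mul_union, Set.mul_singleton, Set.mul_singleton]
    ext b
    constructor
    · rintro (⟨x, hx, rfl⟩ | ⟨x, hx, rfl⟩)
      · simpa [mul_bz] using X.prop
      · simpa [mul_one] using hx
    · intro hb
      exact Or.inr ⟨b, hb, mul_one b⟩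

theorem Smon_mul_val (X Y : Smon) : (X * Y).val = X.val * Y.val := rfl

theorem Smon_one_val : (1 : Smon).val = {bz, 1} := rfl

/-- The element `{0, πᵢ}` of `S`. -/
def sπ (i : Fin 2) : Smon := ⟨{bz, bpi i}, Or.inl rfl⟩

/-- The element `{0, πᵢ*}` of `S`. -/
def sπs (i : Fin 2) : Smon := ⟨{bz, bpis i}, Or.inl rfl⟩

/-- The CQP operation on `S`: `Σ(X, Y) = π₁* X ∪ π₂* Y`. -/
def SgS (X Y : Smon) : Smon :=
  ⟨({bz, bpis 0} : Set Bmon) * X.val ∪ ({bz, bpis 1} : Set Bmon) * Y.val,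
    Or.inl ⟨bz, Or.inl rfl, bz, X.prop, bz_mul bz⟩⟩

/-- The free magma `T` on the free monoid `F` on π₁, π₂: finite nonempty ordered
binary trees with leaves colored by elements of `F`. -/
inductive Tm : Type
  | leaf : FreeMonoid (Fin 2) → Tm
  | node : Tm → Tm → Tm

/-- The action of the generator πᵢ on `T`: it picks out the `i`-th subtree of a
node, and acts by left multiplication on (the color of) a single leaf. -/
def pact (i : Fin 2) : Tm → Tm
  | .leaf w => .leaf (FreeMonoid.of i * w)
  | .node A B => if i = 0 then A else B

/-- The left action of a word `w ∈ F` on `T`, applying the symbols of `w` one at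
a time from right to left. -/
def wact (w : FreeMonoid (Fin 2)) (A : Tm) : Tm :=
  (FreeMonoid.toList w).foldr pact A

/-- The product on `T`: `A * B` replaces each leaf of `A` of color `w` by `w • B`. -/
def tmul : Tm → Tm → Tm
  | .leaf w, B => wact w B
  | .node A₁ A₂, B => .node (tmul A₁ B) (tmul A₂ B)

/-- The identity of `T`: a single leaf colored by the empty word. -/
def tone : Tm := .leaf 1

/-- The list of leaves of a tree `A ∈ T`, in order, recorded as pairs
`(path, color)`: the path from the root to the leaf is described by the word
`path` read from right to left, and `color` is the color of the leaf. -/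
def tleaves : Tm → List (FreeMonoid (Fin 2) × FreeMonoid (Fin 2))
  | .leaf w => [(1, w)]
  | .node A B =>
      ((tleaves A).map fun pc => (pc.1 * FreeMonoid.of 0, pc.2)) ++
        ((tleaves B).map fun pc => (pc.1 * FreeMonoid.of 1, pc.2))

/-- The branch homomorphism `β : T → S`: the magma homomorphism sending a leaf
of color `w` to `{0, w}`. -/
noncomputable def βmap : Tm → Smon
  | .leaf w => ⟨{bz, ιF w}, Or.inl rfl⟩
  | .node A B => SgS (βmap A) (βmap B)

/-! ### Auxiliary: a concrete model distinguishing elements of `Bmon` -/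

/-- Normal forms: `(pr, q)` encodes `(reverse pr)* q`. -/
abbrev NFm := List (Fin 2) × List (Fin 2)

/-- Action of a generator on `Option NFm` (with `none` = 0). -/
def gact : Bgen → Option NFm → Option NFm
  | _, none => none
  | .zero, some _ => none
  | .pi i, some (pr, q) =>
      match pr with
      | [] => some ([], i :: q)
      | j :: t => if i = j then some (t, q) else none
  | .pis i, some (pr, q) => some (i :: pr, q)

theorem gact_none (g : Bgen) : gact g none = none := by cases g <;> rfl

theorem gact_zero (n : Option NFm) : gact Bgen.zero n = none := by
  cases n <;> rfl

/-- The lift of `gact` to the free monoid, into the endomorphism monoid. -/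
def φ0 : FreeMonoid Bgen →* Function.End (Option NFm) :=
  FreeMonoid.lift (fun g => (gact g : Function.End (Option NFm)))

theorem φ0_of_hom (g : Bgen) :
    φ0 (FreeMonoid.of g) = (gact g : Function.End (Option NFm)) :=
  FreeMonoid.lift_eval_of _ g

theorem φ0_of (g : Bgen) (n : Option NFm) : φ0 (FreeMonoid.of g) n = gact g n := by
  rw [φ0_of_hom]

theorem φ0_mul_apply (x y : FreeMonoid Bgen) (n : Option NFm) :
    φ0 (x * y) n = φ0 x (φ0 y n) := by
  rw [map_mul]; rfl

theorem φ0_apply (x : FreeMonoid Bgen) (n : Option NFm) :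
    φ0 x n = (FreeMonoid.toList x).foldr gact n := by
  induction x using FreeMonoid.inductionOn' generalizing n with
  | one => rfl
  | of_mul g x ih =>
      rw [φ0_mul_apply, φ0_of, FreeMonoid.toList_of_mul, List.foldr_cons, ih]

theorem φ0_none (x : FreeMonoid Bgen) : φ0 x none = none := by
  rw [φ0_apply]
  induction FreeMonoid.toList x with
  | nil => rfl
  | cons g l ih => rw [List.foldr_cons, ih, gact_none]

theorem φ0_respects : ∀ x y, Brel x y → φ0 x = φ0 y := by
  intro x y h
  cases h with
  | zero_mul x =>
      funext n
      rw [φ0_mul_apply, φ0_of, φ0_of, gact_zero, gact_zero]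
  | mul_zero x =>
      funext n
      rw [φ0_mul_apply, φ0_of, gact_zero, φ0_none]
  | pi_pis_same i =>
      funext n
      rw [φ0_mul_apply, φ0_of, φ0_of, map_one]
      cases n with
      | none => rw [gact_none, gact_none]; rfl
      | some pq =>
          obtain ⟨pr, q⟩ := pq
          show gact (Bgen.pi i) (some (i :: pr, q)) = _
          simp [gact]
          rfl
  | pi_pis_ne i j hij =>
      funext n
      rw [φ0_mul_apply, φ0_of, φ0_of, φ0_of, gact_zero]
      cases n with
      | none => rw [gact_none, gact_none]
      | some pq =>
          obtain ⟨pr, q⟩ := pq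
          show gact (Bgen.pi i) (some (j :: pr, q)) = none
          simp [gact, hij]

/-- The induced monoid hom on `Bmon`. -/
def φB : Bmon →* Function.End (Option NFm) :=
  Con.lift Bcon φ0 (Con.conGen_le.2 fun x y h => (Con.ker_rel φ0).2 (φ0_respects x y h))

theorem φB_mk' (w : FreeMonoid Bgen) : φB (Bcon.mk' w) = φ0 w :=
  Con.lift_coe _ w

theorem φB_mul_apply (x y : Bmon) (n : Option NFm) :
    φB (x * y) n = φB x (φB y n) := by rw [map_mul]; rfl

/-- Evaluation at the base point. -/
def evB (b : Bmon) : Option NFm := φB b (some ([], []))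

theorem φB_bz (n : Option NFm) : φB bz n = none := by
  rw [bz, φB_mk', φ0_of, gact_zero]

theorem φB_ιF (w : FreeMonoid (Fin 2)) (q : List (Fin 2)) :
    φB (ιF w) (some ([], q)) = some ([], FreeMonoid.toList w ++ q) := by
  induction w using FreeMonoid.inductionOn' generalizing q with
  | one => rw [map_one]; rfl
  | of_mul i w ih =>
      rw [map_mul, φB_mul_apply, ih]
      show φB (Bcon.mk' (FreeMonoid.map Bgen.pi (FreeMonoid.of i))) _ = _
      rw [FreeMonoid.map_of, φB_mk', φ0_of]
      rfl

theorem φB_pis_list (l : List (Fin 2)) (pr q : List (Fin 2)) :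
    φB (Bcon.mk' (FreeMonoid.ofList (l.map Bgen.pis))) (some (pr, q)) =
      some (l ++ pr, q) := by
  induction l generalizing pr with
  | nil => rw [List.map_nil, FreeMonoid.ofList_nil, map_one]; rfl
  | cons a t ih =>
      rw [List.map_cons, FreeMonoid.ofList_cons, map_mul, φB_mul_apply, ih, φB_mk', φ0_of]
      rfl

theorem φB_bstar (w : FreeMonoid (Fin 2)) (pr q : List (Fin 2)) :
    φB (bstar w) (some (pr, q)) =
      some ((FreeMonoid.toList w).reverse ++ pr, q) := by
  rw [bstar]; exact φB_pis_list _ pr q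

/-- The branch element of a (path, color) pair. -/
def fB (pc : FreeMonoid (Fin 2) × FreeMonoid (Fin 2)) : Bmon :=
  bstar pc.1 * ιF pc.2

/-- Its normal form. -/
def gN (pc : FreeMonoid (Fin 2) × FreeMonoid (Fin 2)) : NFm :=
  ((FreeMonoid.toList pc.1).reverse, FreeMonoid.toList pc.2)

theorem evB_fB (pc : FreeMonoid (Fin 2) × FreeMonoid (Fin 2)) :
    evB (fB pc) = some (gN pc) := by
  rw [evB, fB, φB_mul_apply, φB_ιF, List.append_nil, φB_bstar, List.append_nil]
  rfl

theorem fB_ne_bz (pc : FreeMonoid (Fin 2) × FreeMonoid (Fin 2)) : fB pc ≠ bz := by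
  intro h
  have := evB_fB pc
  rw [h] at this
  rw [evB, φB_bz] at this
  cases this

theorem bstar_one : bstar 1 = 1 := by
  rw [bstar, FreeMonoid.toList_one, List.reverse_nil, List.map_nil,
    FreeMonoid.ofList_nil, map_one]

theorem fB_leaf (w : FreeMonoid (Fin 2)) : fB (1, w) = ιF w := by
  rw [fB, bstar_one, one_mul]

theorem bstar_mul_of (w : FreeMonoid (Fin 2)) (i : Fin 2) :
    bstar (w * FreeMonoid.of i) = bpis i * bstar w := by
  rw [bstar, bstar, FreeMonoid.toList_mul, FreeMonoid.toList_of,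
    List.reverse_append, List.reverse_singleton, List.singleton_append,
    List.map_cons, FreeMonoid.ofList_cons, map_mul]
  rfl

theorem fB_shift (pc : FreeMonoid (Fin 2) × FreeMonoid (Fin 2)) (i : Fin 2) :
    fB (pc.1 * FreeMonoid.of i, pc.2) = bpis i * fB pc := by
  rw [fB, fB, bstar_mul_of, mul_assoc]

theorem key_mul (s : Bmon) (X : Set Bmon) :
    ({bz, s} : Set Bmon) * insert bz X = insert bz ((s * ·) '' X) := by
  ext b
  constructor
  · rintro ⟨a, ha, c, hc, rfl⟩
    rw [Set.mem_insert_iff, Set.mem_singleton_iff] at ha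
    rw [Set.mem_insert_iff] at hc
    rcases ha with rfl | rfl
    · exact Or.inl (bz_mul c)
    · rcases hc with rfl | hc
      · exact Or.inl (mul_bz _)
      · exact Or.inr ⟨c, hc, rfl⟩
  · rintro (rfl | ⟨x, hx, rfl⟩)
    · exact ⟨bz, Or.inl rfl, bz, Or.inl rfl, bz_mul bz⟩
    · exact ⟨s, Or.inr rfl, x, Or.inr hx, rfl⟩

theorem βval_eq (A : Tm) :
    (βmap A).val = insert bz {b | ∃ pc ∈ tleaves A, b = fB pc} := by
  induction A with
  | leaf w =>
      show ({bz, ιF w} : Set Bmon) = _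
      ext b
      simp [tleaves, fB_leaf]
  | node A B ihA ihB =>
      show ({bz, bpis 0} : Set Bmon) * (βmap A).val ∪
          ({bz, bpis 1} : Set Bmon) * (βmap B).val = _
      rw [ihA, ihB, key_mul, key_mul]
      ext b
      simp only [Set.mem_union, Set.mem_insert_iff, Set.mem_image,
        Set.mem_setOf_eq, tleaves, List.mem_append, List.mem_map]
      constructor
      · rintro ((rfl | ⟨x, ⟨pc, hpc, rfl⟩, rfl⟩) | (rfl | ⟨x, ⟨pc, hpc, rfl⟩, rfl⟩))
        · exact Or.inl rfl
        · exact Or.inr ⟨(pc.1 * FreeMonoid.of 0, pc.2),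
            Or.inl ⟨pc, hpc, rfl⟩, (fB_shift pc 0).symm⟩
        · exact Or.inl rfl
        · exact Or.inr ⟨(pc.1 * FreeMonoid.of 1, pc.2),
            Or.inr ⟨pc, hpc, rfl⟩, (fB_shift pc 1).symm⟩
      · rintro (rfl | ⟨pc', (⟨pc, hpc, rfl⟩ | ⟨pc, hpc, rfl⟩), rfl⟩)
        · exact Or.inl (Or.inl rfl)
        · exact Or.inl (Or.inr ⟨fB pc, ⟨pc, hpc, rfl⟩, (fB_shift pc 0).symm⟩)
        · exact Or.inr (Or.inr ⟨fB pc, ⟨pc, hpc, rfl⟩, (fB_shift pc 1).symm⟩)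

theorem fB_injective : Function.Injective fB := by
  intro a b h
  have h2 : some (gN a) = some (gN b) := by
    rw [← evB_fB, ← evB_fB, h]
  have h3 : gN a = gN b := Option.some_injective _ h2
  rw [gN, gN, Prod.mk.injEq] at h3
  exact Prod.ext (FreeMonoid.toList.injective (List.reverse_injective h3.1))
    (FreeMonoid.toList.injective h3.2)

theorem gN_shift (pc : FreeMonoid (Fin 2) × FreeMonoid (Fin 2)) (i : Fin 2) :
    gN (pc.1 * FreeMonoid.of i, pc.2) = (i :: (gN pc).1, (gN pc).2) := by
  rw [gN, gN, FreeMonoid.toList_mul, FreeMonoid.toList_of, List.reverse_append,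
    List.reverse_singleton, List.singleton_append]

theorem cons_inj_NF (i : Fin 2) :
    Function.Injective (fun n : NFm => (i :: n.1, n.2)) := by
  intro a b h
  simp only [Prod.mk.injEq, List.cons.injEq, true_and] at h
  exact Prod.ext h.1 h.2

theorem nodup_gN (A : Tm) : ((tleaves A).map gN).Nodup := by
  induction A with
  | leaf w => simp [tleaves]
  | node A B ihA ihB =>
      rw [tleaves, List.map_append, List.map_map, List.map_map]
      have e0 : gN ∘ (fun pc : FreeMonoid (Fin 2) × FreeMonoid (Fin 2) =>
          (pc.1 * FreeMonoid.of 0, pc.2)) =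
          (fun n : NFm => ((0 : Fin 2) :: n.1, n.2)) ∘ gN := by
        funext pc; exact gN_shift pc 0
      have e1 : gN ∘ (fun pc : FreeMonoid (Fin 2) × FreeMonoid (Fin 2) =>
          (pc.1 * FreeMonoid.of 1, pc.2)) =
          (fun n : NFm => ((1 : Fin 2) :: n.1, n.2)) ∘ gN := by
        funext pc; exact gN_shift pc 1
      rw [e0, e1, ← List.map_map, ← List.map_map]
      refine List.Nodup.append (ihA.map (cons_inj_NF 0)) (ihB.map (cons_inj_NF 1)) ?_
      intro a ha hb
      rw [List.mem_map] at ha hb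
      obtain ⟨x, _, hx⟩ := ha
      obtain ⟨y, _, hy⟩ := hb
      rw [← hx] at hy
      simp only [Prod.mk.injEq, List.cons.injEq] at hy
      exact absurd hy.1.1 (by decide)

theorem nodup_fB (A : Tm) : ((tleaves A).map fB).Nodup := by
  refine List.Nodup.of_map evB ?_
  have : ((tleaves A).map fB).map evB = ((tleaves A).map gN).map some := by
    rw [List.map_map, List.map_map]
    refine List.map_congr_left fun pc _ => ?_
    exact evB_fB pc
  rw [this]
  exact (nodup_gN A).map (Option.some_injective _)

/-- For `A ∈ T`, the non-zero elements of `β(A)` are exactly the elements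
`w₁* w₂` where `(w₁, w₂)` ranges over the (paths, colors) of the leaves of `A`;
in particular, the number of non-zero elements of `β(A)` is the number of
leaves of `A`. -/
theorem βmap_branches (A : Tm) :
    ((βmap A).val \ {bz} = {b | ∃ pc ∈ tleaves A, b = bstar pc.1 * ιF pc.2}) ∧
      Set.ncard ((βmap A).val \ {bz}) = (tleaves A).length := by
  have hnotin : bz ∉ {b | ∃ pc ∈ tleaves A, b = fB pc} := by
    rintro ⟨pc, _, h⟩
    exact fB_ne_bz pc h.symm
  have h1 : (βmap A).val \ {bz} = {b | ∃ pc ∈ tleaves A, b = fB pc} := by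
    rw [βval_eq, Set.insert_diff_self_of_notMem hnotin]
  classical
  have hset : {b | ∃ pc ∈ tleaves A, b = fB pc} =
      ↑((tleaves A).map fB).toFinset := by
    ext b
    simp only [Set.mem_setOf_eq, List.coe_toFinset, List.mem_map]
    constructor
    · rintro ⟨pc, hpc, rfl⟩; exact ⟨pc, hpc, rfl⟩
    · rintro ⟨pc, hpc, rfl⟩; exact ⟨pc, hpc, rfl⟩
  refine ⟨h1, ?_⟩
  rw [h1, hset, Set.ncard_coe_finset, List.toFinset_card_of_nodup (nodup_fB A),
    List.length_map]
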